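/- Let s be as in the context (any of the four cases). Let 1 ≤ k ≤ D+1, α ∈ Δ_Z, β ∈ Δ̄_K^k ∩ Δ^C and δ ∈ Δ̄_K^k ∩ Δ^R. If α + β ∈ Δ then α + β ∈ Δ̄_K^k ∩ Δ^C, and if α + δ ∈ Δ then α + δ ∈ Δ̄_K^k ∩ Δ^R. -/

import Mathlib

/- Common framework: type A_l root system realized in ℝ^{ℕ} (coordinates 1,…,l+1 used),
   the Weyl group as permutations of ℕ acting by permuting coordinates, and the
   Weyl group element s = s₁s₂ of Proposition 4.2 (all four parity cases). -/

noncomputable section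

namespace DPW

/-- The ambient vector space (only coordinates 1,…,l+1 are used). -/
abbrev V : Type := ℕ → ℝ

/-- Standard basis vector e_i. -/
def evec (i : ℕ) : V := fun j => if j = i then 1 else 0

/-- The root e_i − e_j. -/
def rt (i j : ℕ) : V := evec i - evec j

/-- The root system Δ of type A_l. -/
def Delta (l : ℕ) : Set V :=
  {v | ∃ i j, 1 ≤ i ∧ i ≤ l + 1 ∧ 1 ≤ j ∧ j ≤ l + 1 ∧ i ≠ j ∧ v = rt i j}

/-- Positive roots Δ₊. -/
def DeltaPos (l : ℕ) : Set V :=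
  {v | ∃ i j, 1 ≤ i ∧ i < j ∧ j ≤ l + 1 ∧ v = rt i j}

/-- Negative roots Δ₋ = −Δ₊. -/
def DeltaNeg (l : ℕ) : Set V := {v | -v ∈ DeltaPos l}

/-- Action of a permutation on V : (σ·v)_j = v_{σ⁻¹(j)}. -/
def pact (σ : Equiv.Perm ℕ) (v : V) : V := fun j => v (σ⁻¹ j)

/-- row(e_a − e_b) = a. -/
def rowOf (v : V) : ℕ := sInf {a | v a = 1}

/-- col(e_a − e_b) = b. -/
def colOf (v : V) : ℕ := sInf {b | v b = (-1 : ℝ)}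

/-- Product of the simple reflections s_{α_i} = (i, i+1) for i in a list. -/
def swapProd (idxs : List ℕ) : Equiv.Perm ℕ :=
  (idxs.map (fun i => Equiv.swap i (i + 1))).prod

/-- The Weyl group element s = s₁s₂ (cases (i)–(iv) according to the parities of
    m = ⌊(l′−1)/2⌋ and l′; here p = l − l′ and s_γ = (m+1, m+p+2)). -/
def weylS (l l' : ℕ) : Equiv.Perm ℕ :=
  let m := (l' - 1) / 2
  let p := l - l'
  if m % 2 = 0 then
    if l' % 2 = 1 then
      -- case (i)
      (swapProd (List.range' 2 (m / 2) 2) * swapProd (List.range' (m + p + 2) (m / 2) 2)) *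
        (swapProd (List.range' 1 (m / 2) 2) * Equiv.swap (m + 1) (m + p + 2) *
          swapProd (List.range' (m + p + 3) (m / 2) 2))
    else
      -- case (ii)
      (swapProd (List.range' 2 (m / 2) 2) * swapProd (List.range' (m + p + 2) (m / 2 + 1) 2)) *
        (swapProd (List.range' 1 (m / 2) 2) * Equiv.swap (m + 1) (m + p + 2) *
          swapProd (List.range' (m + p + 3) (m / 2) 2))
  else
    if l' % 2 = 1 then
      -- case (iii)
      (swapProd (List.range' 1 ((m + 1) / 2) 2) *
          swapProd (List.range' (m + p + 2) ((m + 1) / 2) 2)) *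
        (swapProd (List.range' 2 ((m - 1) / 2) 2) * Equiv.swap (m + 1) (m + p + 2) *
          swapProd (List.range' (m + p + 3) ((m - 1) / 2) 2))
    else
      -- case (iv)
      (swapProd (List.range' 1 ((m + 1) / 2) 2) *
          swapProd (List.range' (m + p + 2) ((m + 1) / 2) 2)) *
        (swapProd (List.range' 2 ((m - 1) / 2) 2) * Equiv.swap (m + 1) (m + p + 2) *
          swapProd (List.range' (m + p + 3) ((m + 1) / 2) 2))

/-- Δ_s = {α ∈ Δ₊ : sα ∈ Δ₋}. -/
def DeltaS (l : ℕ) (s : Equiv.Perm ℕ) : Set V :=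
  {v ∈ DeltaPos l | pact s v ∈ DeltaNeg l}

/-- Δ_{s⁻¹} = {α ∈ Δ₊ : s⁻¹α ∈ Δ₋}. -/
def DeltaSinv (l : ℕ) (s : Equiv.Perm ℕ) : Set V :=
  {v ∈ DeltaPos l | pact s⁻¹ v ∈ DeltaNeg l}

/-- (Δ̄_K)₊ = {α ∈ Δ₊ : sα ≠ α}. -/
def DeltaKpos (l : ℕ) (s : Equiv.Perm ℕ) : Set V :=
  {v ∈ DeltaPos l | pact s v ≠ v}

/-- (Δ̄_K)₋ = −(Δ̄_K)₊. -/
def DeltaKneg (l : ℕ) (s : Equiv.Perm ℕ) : Set V := {v | -v ∈ DeltaKpos l s}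

/-- Δ^C = {α ∈ (Δ̄_K)₊ : row(sα) = row(α)}. -/
def DeltaC (l : ℕ) (s : Equiv.Perm ℕ) : Set V :=
  {v ∈ DeltaKpos l s | rowOf (pact s v) = rowOf v}

/-- Δ^R = {α ∈ (Δ̄_K)₊ : col(sα) = col(α)}. -/
def DeltaR (l : ℕ) (s : Equiv.Perm ℕ) : Set V :=
  {v ∈ DeltaKpos l s | colOf (pact s v) = colOf v}

/-- Δ^O = (Δ̄_K)₊ \ (Δ^C ∪ Δ^R). -/
def DeltaO (l : ℕ) (s : Equiv.Perm ℕ) : Set V :=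
  DeltaKpos l s \ (DeltaC l s ∪ DeltaR l s)

/-- Δ₁^O = {α ∈ Δ^O : row(α) ≥ m+p+2}. -/
def DeltaO1 (l : ℕ) (s : Equiv.Perm ℕ) (m p : ℕ) : Set V :=
  {v ∈ DeltaO l s | m + p + 2 ≤ rowOf v}

/-- Δ₂^O = {α ∈ Δ^O : col(α) ≤ m+1}. -/
def DeltaO2 (l : ℕ) (s : Equiv.Perm ℕ) (m : ℕ) : Set V :=
  {v ∈ DeltaO l s | colOf v ≤ m + 1}

/-- Δ₃^O = Δ^O \ (Δ₁^O ∪ Δ₂^O). -/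
def DeltaO3 (l : ℕ) (s : Equiv.Perm ℕ) (m p : ℕ) : Set V :=
  DeltaO l s \ (DeltaO1 l s m p ∪ DeltaO2 l s m)

/-- Δ̄_K^k = {α ∈ (Δ̄_K)₊ : s^{−j}α ∈ (Δ̄_K)₊ for 1 ≤ j ≤ k−1 and s^{−k}α ∈ (Δ̄_K)₋}. -/
def DeltaKk (l : ℕ) (s : Equiv.Perm ℕ) (k : ℕ) : Set V :=
  {v ∈ DeltaKpos l s |
    (∀ j, 1 ≤ j → j ≤ k - 1 → pact (s⁻¹ ^ j) v ∈ DeltaKpos l s) ∧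
      pact (s⁻¹ ^ k) v ∈ DeltaKneg l s}

/-- d(α) = min{k ≥ 1 : s^{−k}α ∈ Δ₋}. -/
def dd (l : ℕ) (s : Equiv.Perm ℕ) (v : V) : ℕ :=
  sInf {k | 1 ≤ k ∧ pact (s⁻¹ ^ k) v ∈ DeltaNeg l}

/-- Δ_Z = {e_i − e_j : m+2 ≤ i, j ≤ m+p+1, i ≠ j}. -/
def DeltaZ (m p : ℕ) : Set V :=
  {v | ∃ i j, m + 2 ≤ i ∧ i ≤ m + p + 1 ∧ m + 2 ≤ j ∧ j ≤ m + p + 1 ∧ i ≠ j ∧ v = rt i j}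

/-- The ⟨s⟩-orbit of a vector. -/
def orbitOf (s : Equiv.Perm ℕ) (v : V) : Set V := {w | ∃ n : ℤ, w = pact (s ^ n) v}

/-- The set P_κ (for κ ∈ Δ̄_K^k). -/
def Pk (l : ℕ) (s : Equiv.Perm ℕ) (k : ℕ) (κ : V) : Set (V × V) :=
  {q | (∃ i, 2 ≤ i ∧ i ≤ k - 1 ∧ q.1 ∈ DeltaKk l s i) ∧ q.2 ∈ DeltaKk l s k ∧ κ = q.1 + q.2}

/-- The set P′_κ (for κ ∈ Δ̄_K^k). -/
def Pk' (l : ℕ) (s : Equiv.Perm ℕ) (k : ℕ) (κ : V) : Set (V × V) :=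
  {q | q.1 ∈ DeltaKk l s k ∧ q.2 ∈ DeltaKk l s k ∧ κ = q.1 + q.2}

/-- The eigenvector v^λ of case (i) (m even, l′ = 2m+1 odd). -/
def vlam (m p : ℕ) (lam : ℂ) : ℕ → ℂ := fun j =>
  if j = 0 then 0
  else if j ≤ m + 1 then
    (if j % 2 = 1 then lam ^ ((4 * m + 5 - j) / 2) else lam ^ (j / 2))
  else if j ≤ m + p + 1 then 0
  else if j ≤ m + p + m + 2 then
    (if (j - (m + p)) % 2 = 0 then lam ^ ((m + (j - (m + p))) / 2)
     else lam ^ ((3 * m + 5 - (j - (m + p))) / 2))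
  else 0


-- ===== auxiliary lemmas =====

lemma rt_apply (a b x : ℕ) : rt a b x = (if x = a then (1:ℝ) else 0) - (if x = b then 1 else 0) := rfl

lemma pact_rt (σ : Equiv.Perm ℕ) (a b : ℕ) : pact σ (rt a b) = rt (σ a) (σ b) := by
  funext x
  simp only [pact, rt_apply, Equiv.Perm.inv_eq_iff_eq]

lemma rt_inj {a b c d : ℕ} (hab : a ≠ b) (h : rt a b = rt c d) : a = c ∧ b = d := by
  have h1 := congrFun h a
  have h2 := congrFun h b
  rw [rt_apply, rt_apply] at h1 h2
  split_ifs at h1 h2 <;> norm_num at h1 <;> norm_num at h2 <;> omega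

lemma rowOf_rt {a b : ℕ} (hab : a ≠ b) : rowOf (rt a b) = a := by
  have hs : {x | rt a b x = 1} = {a} := by
    ext x
    simp only [Set.mem_setOf_eq, Set.mem_singleton_iff, rt_apply]
    constructor
    · intro h; split_ifs at h with h1 h2 <;> first | exact h1 | norm_num at h
    · rintro rfl; rw [if_pos rfl, if_neg hab]; norm_num
  rw [rowOf, hs, csInf_singleton]

lemma colOf_rt {a b : ℕ} (hab : a ≠ b) : colOf (rt a b) = b := by
  have hs : {x | rt a b x = (-1:ℝ)} = {b} := by
    ext x
    simp only [Set.mem_setOf_eq, Set.mem_singleton_iff, rt_apply]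
    constructor
    · intro h; split_ifs at h with h1 h2 <;> first | assumption | norm_num at h
    · rintro rfl; rw [if_neg (Ne.symm hab), if_pos rfl]; norm_num
  rw [colOf, hs, csInf_singleton]

lemma neg_rt (a b : ℕ) : -(rt a b) = rt b a := by
  unfold rt; abel

lemma rt_add_rt_left (i j b : ℕ) : rt i j + rt j b = rt i b := by
  unfold rt; abel

lemma rt_add_rt_right (i j a : ℕ) : rt i j + rt a i = rt a j := by
  unfold rt; abel

lemma mem_DeltaPos_rt {l a b : ℕ} : rt a b ∈ DeltaPos l ↔ 1 ≤ a ∧ a < b ∧ b ≤ l + 1 := by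
  constructor
  · rintro ⟨i, j, h1, hij, hj, hv⟩
    have hab : a ≠ b := by
      rintro rfl
      have := congrFun hv i
      rw [rt_apply, rt_apply, if_pos rfl, if_neg (Nat.ne_of_lt hij)] at this
      split_ifs at this <;> norm_num at this
    obtain ⟨rfl, rfl⟩ := rt_inj hab hv
    exact ⟨h1, hij, hj⟩
  · rintro ⟨h1, h2, h3⟩; exact ⟨a, b, h1, h2, h3, rfl⟩

lemma mem_DeltaKpos_rt {l : ℕ} {s : Equiv.Perm ℕ} {a b : ℕ} :
    rt a b ∈ DeltaKpos l s ↔ (1 ≤ a ∧ a < b ∧ b ≤ l + 1) ∧ (s a ≠ a ∨ s b ≠ b) := by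
  constructor
  · rintro ⟨hpos, hne⟩
    have h1 := mem_DeltaPos_rt.mp hpos
    refine ⟨h1, ?_⟩
    by_contra hcon
    push_neg at hcon
    exact hne (by rw [pact_rt, hcon.1, hcon.2])
  · rintro ⟨⟨h1, h2, h3⟩, hor⟩
    refine ⟨mem_DeltaPos_rt.mpr ⟨h1, h2, h3⟩, ?_⟩
    rw [pact_rt]
    intro heq
    have hne : s a ≠ s b := fun h => (Nat.ne_of_lt h2) (s.injective h)
    obtain ⟨ha, hb⟩ := rt_inj hne heq
    tauto

lemma pow_fix {σ : Equiv.Perm ℕ} {a : ℕ} (h : σ a = a) : ∀ t, (σ ^ t) a = a := by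
  intro t
  induction t with
  | zero => simp
  | succ n ih => rw [pow_succ, Equiv.Perm.mul_apply, h, ih]

lemma inv_fix {σ : Equiv.Perm ℕ} {a : ℕ} (h : σ a = a) : σ⁻¹ a = a := by
  have := Equiv.symm_apply_apply σ a
  rw [h] at this
  exact this

lemma moved_iter {s : Equiv.Perm ℕ} {b : ℕ} (hb : s b ≠ b) (t : ℕ) :
    s ((s⁻¹ ^ t) b) ≠ (s⁻¹ ^ t) b := by
  intro h
  apply hb
  have hc : Commute s (s⁻¹ ^ t) := ((Commute.refl s).inv_right).pow_right t
  have h2 : s ((s⁻¹ ^ t) b) = (s⁻¹ ^ t) (s b) := by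
    have := congrArg (fun σ : Equiv.Perm ℕ => σ b) hc.eq
    simpa [Equiv.Perm.mul_apply] using this
  rw [h2] at h
  exact (Equiv.injective (s⁻¹ ^ t)) h

lemma swapProd_fix (L : List ℕ) (x : ℕ) (h : ∀ i ∈ L, i ≠ x ∧ i + 1 ≠ x) :
    swapProd L x = x := by
  induction L with
  | nil => simp [swapProd]
  | cons a t ih =>
    have ht : swapProd t x = x := ih (fun i hi => h i (List.mem_cons_of_mem _ hi))
    have ha := h a List.mem_cons_self
    show (Equiv.swap a (a + 1) * swapProd t) x = x
    rw [Equiv.Perm.mul_apply, ht]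
    exact Equiv.swap_apply_of_ne_of_ne (Ne.symm ha.1) (Ne.symm ha.2)

lemma swapProd_range'_fix (a n x : ℕ) (h : x < a ∨ a + 2 * n ≤ x) :
    swapProd (List.range' a n 2) x = x := by
  apply swapProd_fix
  intro i hi
  rw [List.mem_range'] at hi
  obtain ⟨t, ht, rfl⟩ := hi
  omega

lemma weylS_fix (l l' m p : ℕ) (h5 : 5 ≤ l') (hll : l' ≤ l)
    (hm : m = (l' - 1) / 2) (hp : p = l - l') (x : ℕ)
    (hx1 : m + 2 ≤ x) (hx2 : x ≤ m + p + 1) : weylS l l' x = x := by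
  have h5' : 2 ≤ m := by omega
  simp only [weylS]
  rw [← hm, ← hp]
  split_ifs with h1 h2 h3 <;> simp only [Equiv.Perm.mul_apply]
  · rw [show swapProd (List.range' (m + p + 3) (m / 2) 2) x = x from
        swapProd_range'_fix _ _ _ (by omega),
      Equiv.swap_apply_of_ne_of_ne (show x ≠ m + 1 by omega) (show x ≠ m + p + 2 by omega),
      show swapProd (List.range' 1 (m / 2) 2) x = x from swapProd_range'_fix _ _ _ (by omega),
      show swapProd (List.range' (m + p + 2) (m / 2) 2) x = x from
        swapProd_range'_fix _ _ _ (by omega)]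
    exact swapProd_range'_fix _ _ _ (by omega)
  · rw [show swapProd (List.range' (m + p + 3) (m / 2) 2) x = x from
        swapProd_range'_fix _ _ _ (by omega),
      Equiv.swap_apply_of_ne_of_ne (show x ≠ m + 1 by omega) (show x ≠ m + p + 2 by omega),
      show swapProd (List.range' 1 (m / 2) 2) x = x from swapProd_range'_fix _ _ _ (by omega),
      show swapProd (List.range' (m + p + 2) (m / 2 + 1) 2) x = x from
        swapProd_range'_fix _ _ _ (by omega)]
    exact swapProd_range'_fix _ _ _ (by omega)
  · rw [show swapProd (List.range' (m + p + 3) ((m - 1) / 2) 2) x = x from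
        swapProd_range'_fix _ _ _ (by omega),
      Equiv.swap_apply_of_ne_of_ne (show x ≠ m + 1 by omega) (show x ≠ m + p + 2 by omega),
      show swapProd (List.range' 2 ((m - 1) / 2) 2) x = x from
        swapProd_range'_fix _ _ _ (by omega),
      show swapProd (List.range' (m + p + 2) ((m + 1) / 2) 2) x = x from
        swapProd_range'_fix _ _ _ (by omega)]
    exact swapProd_range'_fix _ _ _ (by omega)
  · rw [show swapProd (List.range' (m + p + 3) ((m + 1) / 2) 2) x = x from
        swapProd_range'_fix _ _ _ (by omega),
      Equiv.swap_apply_of_ne_of_ne (show x ≠ m + 1 by omega) (show x ≠ m + p + 2 by omega),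
      show swapProd (List.range' 2 ((m - 1) / 2) 2) x = x from
        swapProd_range'_fix _ _ _ (by omega),
      show swapProd (List.range' (m + p + 2) ((m + 1) / 2) 2) x = x from
        swapProd_range'_fix _ _ _ (by omega)]
    exact swapProd_range'_fix _ _ _ (by omega)

lemma rt_eq_one {x y c : ℕ} (h : rt x y c = 1) : c = x := by
  rw [rt_apply] at h
  split_ifs at h <;> first | assumption | norm_num at h

lemma rt_eq_negone {x y c : ℕ} (h : rt x y c = -1) : c = y := by
  rw [rt_apply] at h
  split_ifs at h <;> first | assumption | norm_num at h

lemma rt_ne_two (x y c : ℕ) : rt x y c ≠ 2 := by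
  rw [rt_apply]; split_ifs <;> norm_num

lemma rt_ne_negtwo (x y c : ℕ) : rt x y c ≠ -2 := by
  rw [rt_apply]; split_ifs <;> norm_num

lemma sum_case_C {l i j a b : ℕ} (hij : i ≠ j) (hab : a ≠ b) (hbi : b ≠ i) (hbj : b ≠ j)
    (h : rt i j + rt a b ∈ Delta l) : a = j := by
  obtain ⟨x, y, _, _, _, _, hxy, hv⟩ := h
  by_cases haj : a = j
  · exact haj
  exfalso
  by_cases hai : a = i
  · subst hai
    have e : (rt a j + rt a b) a = 2 := by
      rw [Pi.add_apply, rt_apply, rt_apply, if_pos rfl, if_neg haj, if_neg hab]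
      norm_num
    rw [hv] at e
    exact rt_ne_two x y a e
  · have e1 : (rt i j + rt a b) i = 1 := by
      rw [Pi.add_apply, rt_apply, rt_apply, if_pos rfl, if_neg hij,
        if_neg (fun hh : i = a => hai hh.symm), if_neg (Ne.symm hbi)]
      norm_num
    have e2 : (rt i j + rt a b) a = 1 := by
      rw [Pi.add_apply, rt_apply, rt_apply, if_neg hai, if_neg haj, if_pos rfl, if_neg hab]
      norm_num
    rw [hv] at e1 e2
    exact hai ((rt_eq_one e2).trans (rt_eq_one e1).symm)

lemma sum_case_R {l i j a b : ℕ} (hij : i ≠ j) (hab : a ≠ b) (hai : a ≠ i) (haj : a ≠ j)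
    (h : rt i j + rt a b ∈ Delta l) : b = i := by
  obtain ⟨x, y, _, _, _, _, hxy, hv⟩ := h
  by_cases hbi : b = i
  · exact hbi
  exfalso
  by_cases hbj : b = j
  · subst hbj
    have e : (rt i b + rt a b) b = -2 := by
      rw [Pi.add_apply, rt_apply, rt_apply, if_neg (Ne.symm hij), if_pos rfl, if_neg (Ne.symm haj)]
      norm_num
    rw [hv] at e
    exact rt_ne_negtwo x y b e
  · have e1 : (rt i j + rt a b) j = -1 := by
      rw [Pi.add_apply, rt_apply, rt_apply, if_neg (Ne.symm hij), if_pos rfl,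
        if_neg (Ne.symm haj), if_neg (fun hh : j = b => hbj hh.symm)]
      norm_num
    have e2 : (rt i j + rt a b) b = -1 := by
      rw [Pi.add_apply, rt_apply, rt_apply, if_neg hbi, if_neg hbj,
        if_neg (Ne.symm hab), if_pos rfl]
      norm_num
    rw [hv] at e1 e2
    exact hbj ((rt_eq_negone e2).trans (rt_eq_negone e1).symm)

lemma partC (l m p : ℕ) (s : Equiv.Perm ℕ) (hmp : m + p + 1 ≤ l + 1)
    (hsfix : ∀ x, m + 2 ≤ x → x ≤ m + p + 1 → s x = x) (k : ℕ) :
    ∀ α ∈ DeltaZ m p, ∀ β ∈ DeltaKk l s k ∩ DeltaC l s,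
      α + β ∈ Delta l → α + β ∈ DeltaKk l s k ∩ DeltaC l s := by
  rintro α ⟨i, j, hi1, hi2, hj1, hj2, hij, rfl⟩ β ⟨hβk, hβc⟩ hsum
  obtain ⟨hβKpos, hβiter, hβneg⟩ := hβk
  obtain ⟨-, hβrow⟩ := hβc
  obtain ⟨hβpos, hβmoved⟩ := hβKpos
  obtain ⟨a, b, ha1, hab, hbl, rfl⟩ := hβpos
  have habne : a ≠ b := Nat.ne_of_lt hab
  have hsane : s a ≠ s b := fun h => habne (s.injective h)
  rw [pact_rt, rowOf_rt hsane, rowOf_rt habne] at hβrow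
  have hbmoved : s b ≠ b := fun h => hβmoved (by rw [pact_rt, hβrow, h])
  have hfi : s i = i := hsfix i (by omega) (by omega)
  have hfj : s j = j := hsfix j (by omega) (by omega)
  have hbi : b ≠ i := fun h => hbmoved (h ▸ hfi)
  have hbj : b ≠ j := fun h => hbmoved (h ▸ hfj)
  have haj : a = j := sum_case_C hij habne hbi hbj hsum
  subst haj
  rw [rt_add_rt_left]
  have hnotZ : ∀ c, s c ≠ c → ¬(m + 2 ≤ c ∧ c ≤ m + p + 1) := fun c hc hcc =>
    hc (hsfix c hcc.1 hcc.2)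
  have hbZ := hnotZ b hbmoved
  have hbge : m + p + 2 ≤ b := by omega
  have hfinv : ∀ t, (s⁻¹ ^ t) a = a := fun t => pow_fix (inv_fix hβrow) t
  have hfinvi : ∀ t, (s⁻¹ ^ t) i = i := fun t => pow_fix (inv_fix hfi) t
  have huKpos : rt i b ∈ DeltaKpos l s :=
    mem_DeltaKpos_rt.mpr ⟨⟨by omega, by omega, hbl⟩, Or.inr hbmoved⟩
  constructor
  · refine ⟨huKpos, ?_, ?_⟩
    · intro t ht1 ht2
      have h := hβiter t ht1 ht2
      rw [pact_rt, hfinv t] at h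
      obtain ⟨⟨-, habt, hbtl⟩, -⟩ := mem_DeltaKpos_rt.mp h
      have hbtmoved := moved_iter hbmoved t
      have hbtZ := hnotZ _ hbtmoved
      rw [pact_rt, hfinvi t]
      exact mem_DeltaKpos_rt.mpr ⟨⟨by omega, by omega, hbtl⟩, Or.inr hbtmoved⟩
    · have h : -(pact (s⁻¹ ^ k) (rt a b)) ∈ DeltaKpos l s := hβneg
      rw [pact_rt, hfinv k, neg_rt] at h
      obtain ⟨⟨hbk1, hbka, hal⟩, -⟩ := mem_DeltaKpos_rt.mp h
      have hbkmoved := moved_iter hbmoved k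
      have hbkZ := hnotZ _ hbkmoved
      show -(pact (s⁻¹ ^ k) (rt i b)) ∈ DeltaKpos l s
      rw [pact_rt, hfinvi k, neg_rt]
      exact mem_DeltaKpos_rt.mpr ⟨⟨hbk1, by omega, by omega⟩, Or.inl hbkmoved⟩
  · refine ⟨huKpos, ?_⟩
    have hsbmoved : s (s b) ≠ s b := fun h => hbmoved (s.injective h)
    have hsbZ := hnotZ _ hsbmoved
    rw [pact_rt, hfi, rowOf_rt (show (i : ℕ) ≠ s b by omega), rowOf_rt (show i ≠ b by omega)]

lemma partR (l m p : ℕ) (s : Equiv.Perm ℕ) (hmp : m + p + 1 ≤ l + 1)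
    (hsfix : ∀ x, m + 2 ≤ x → x ≤ m + p + 1 → s x = x) (k : ℕ) :
    ∀ α ∈ DeltaZ m p, ∀ δ ∈ DeltaKk l s k ∩ DeltaR l s,
      α + δ ∈ Delta l → α + δ ∈ DeltaKk l s k ∩ DeltaR l s := by
  rintro α ⟨i, j, hi1, hi2, hj1, hj2, hij, rfl⟩ δ ⟨hδk, hδc⟩ hsum
  obtain ⟨hδKpos, hδiter, hδneg⟩ := hδk
  obtain ⟨-, hδcol⟩ := hδc
  obtain ⟨hδpos, hδmoved⟩ := hδKpos
  obtain ⟨a, b, ha1, hab, hbl, rfl⟩ := hδpos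
  have habne : a ≠ b := Nat.ne_of_lt hab
  have hsane : s a ≠ s b := fun h => habne (s.injective h)
  rw [pact_rt, colOf_rt hsane, colOf_rt habne] at hδcol
  have hamoved : s a ≠ a := fun h => hδmoved (by rw [pact_rt, hδcol, h])
  have hfi : s i = i := hsfix i (by omega) (by omega)
  have hfj : s j = j := hsfix j (by omega) (by omega)
  have hai : a ≠ i := fun h => hamoved (h ▸ hfi)
  have haj : a ≠ j := fun h => hamoved (h ▸ hfj)
  have hbi : b = i := sum_case_R hij habne hai haj hsum
  subst hbi
  rw [rt_add_rt_right]
  have hnotZ : ∀ c, s c ≠ c → ¬(m + 2 ≤ c ∧ c ≤ m + p + 1) := fun c hc hcc =>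
    hc (hsfix c hcc.1 hcc.2)
  have haZ := hnotZ a hamoved
  have hale : a + 1 ≤ m + 2 := by omega
  have hfinv : ∀ t, (s⁻¹ ^ t) b = b := fun t => pow_fix (inv_fix hδcol) t
  have hfinvj : ∀ t, (s⁻¹ ^ t) j = j := fun t => pow_fix (inv_fix hfj) t
  have huKpos : rt a j ∈ DeltaKpos l s :=
    mem_DeltaKpos_rt.mpr ⟨⟨ha1, by omega, by omega⟩, Or.inl hamoved⟩
  constructor
  · refine ⟨huKpos, ?_, ?_⟩
    · intro t ht1 ht2
      have h := hδiter t ht1 ht2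
      rw [pact_rt, hfinv t] at h
      obtain ⟨⟨hat1, habt, -⟩, -⟩ := mem_DeltaKpos_rt.mp h
      have hatmoved := moved_iter hamoved t
      have hatZ := hnotZ _ hatmoved
      rw [pact_rt, hfinvj t]
      exact mem_DeltaKpos_rt.mpr ⟨⟨hat1, by omega, by omega⟩, Or.inl hatmoved⟩
    · have h : -(pact (s⁻¹ ^ k) (rt a b)) ∈ DeltaKpos l s := hδneg
      rw [pact_rt, hfinv k, neg_rt] at h
      obtain ⟨⟨hb1, hbak, hakl⟩, -⟩ := mem_DeltaKpos_rt.mp h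
      have hakmoved := moved_iter hamoved k
      have hakZ := hnotZ _ hakmoved
      show -(pact (s⁻¹ ^ k) (rt a j)) ∈ DeltaKpos l s
      rw [pact_rt, hfinvj k, neg_rt]
      exact mem_DeltaKpos_rt.mpr ⟨⟨by omega, by omega, hakl⟩, Or.inr hakmoved⟩
  · refine ⟨huKpos, ?_⟩
    have hsamoved : s (s a) ≠ s a := fun h => hamoved (s.injective h)
    have hsaZ := hnotZ _ hsamoved
    rw [pact_rt, hfj, colOf_rt (show s a ≠ j by omega), colOf_rt (show a ≠ j by omega)]

/-- for α ∈ Δ_Z, β ∈ Δ̄_K^k ∩ Δ^C and δ ∈ Δ̄_K^k ∩ Δ^R: if α + β ∈ Δ then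
α + β ∈ Δ̄_K^k ∩ Δ^C, and if α + δ ∈ Δ then α + δ ∈ Δ̄_K^k ∩ Δ^R. -/
theorem stmt9 (l l' m p : ℕ) (h5 : 5 ≤ l') (hll : l' ≤ l)
    (hm : m = (l' - 1) / 2) (hp : p = l - l') :
    let s := weylS l l'
    ∀ k, 1 ≤ k →
      (∀ α ∈ DeltaZ m p, ∀ β ∈ DeltaKk l s k ∩ DeltaC l s,
        α + β ∈ Delta l → α + β ∈ DeltaKk l s k ∩ DeltaC l s) ∧
        (∀ α ∈ DeltaZ m p, ∀ δ ∈ DeltaKk l s k ∩ DeltaR l s,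
          α + δ ∈ Delta l → α + δ ∈ DeltaKk l s k ∩ DeltaR l s) := by
  intro s k _
  have hsfix : ∀ x, m + 2 ≤ x → x ≤ m + p + 1 → s x = x := fun x h1 h2 =>
    weylS_fix l l' m p h5 hll hm hp x h1 h2
  have hmp : m + p + 1 ≤ l + 1 := by omega
  exact ⟨partC l m p s hmp hsfix k, partR l m p s hmp hsfix k⟩
end DPW
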